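/- Let G be a topological group and A ⊆ G. Then A is coarsely bounded in G if and only if for every sequence (U_n)_{n ∈ ℕ} of open subsets of G satisfying U_n ⊆ U_{n+1}, U_n · U_n ⊆ U_{n+1} for all n, and ⋃_{n ∈ ℕ} U_n = G, there exists n with A ⊆ U_n. -/

import Mathlib

open Pointwise

/-- A continuous, left-invariant pseudometric on a topological group `G`. -/
structure IsContLeftInvPseudometric (G : Type*) [Group G] [TopologicalSpace G]
    (d : G → G → ℝ) : Prop where
  continuous : Continuous fun p : G × G => d p.1 p.2
  self : ∀ x : G, d x x = 0
  symm : ∀ x y : G, d x y = d y x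
  nonneg : ∀ x y : G, 0 ≤ d x y
  triangle : ∀ x y z : G, d x z ≤ d x y + d y z
  left_inv : ∀ g x y : G, d (g * x) (g * y) = d x y

/-- A subset `A` of a topological group `G` is coarsely bounded in `G` if it has
finite diameter with respect to every continuous left-invariant pseudometric on `G`. -/
def IsCoarselyBounded (G : Type*) [Group G] [TopologicalSpace G] (A : Set G) : Prop :=
  ∀ d : G → G → ℝ, IsContLeftInvPseudometric G d →
    ∃ M : ℝ, ∀ a ∈ A, ∀ b ∈ A, d a b ≤ M

/-- The word length of `g` with respect to a generating set `S`: the least `n` such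
that `g` is a product of `n` elements of `S`. -/
noncomputable def wordLength {G : Type*} [Group G] (S : Set G) (g : G) : ℕ :=
  sInf {n : ℕ | ∃ l : List G, l.length = n ∧ (∀ s ∈ l, s ∈ S) ∧ l.prod = g}

/-- `G` admits a geometry if there is a continuous left-invariant pseudometric on `G`
which dominates, in the coarse Lipschitz sense, every continuous left-invariant
pseudometric on `G`. -/
def AdmitsAGeometry (G : Type*) [Group G] [TopologicalSpace G] : Prop :=
  ∃ d : G → G → ℝ, IsContLeftInvPseudometric G d ∧
    ∀ d' : G → G → ℝ, IsContLeftInvPseudometric G d' →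
      ∃ L K : ℝ, 0 < L ∧ 0 ≤ K ∧ ∀ g h : G, d' g h ≤ L * d g h + K

section Aux

open NNReal

variable {G : Type*} [Group G] [TopologicalSpace G] [IsTopologicalGroup G]

private lemma nnreal_eq_zero_of_le_pow {x : ℝ≥0} (h : ∀ n : ℕ, x ≤ 2⁻¹ ^ n) : x = 0 := by
  by_contra hx
  obtain ⟨n, hn⟩ := NNReal.exists_pow_lt_of_lt_one (pos_iff_ne_zero.2 hx) two_inv_lt_one
  exact absurd (h n) (not_le.2 hn)

private lemma exists_symm_cube {S : Set G} (hS : IsOpen S) (h1 : (1 : G) ∈ S) :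
    ∃ T : Set G, IsOpen T ∧ (1 : G) ∈ T ∧ T⁻¹ = T ∧
      ∀ a ∈ T, ∀ b ∈ T, ∀ c ∈ T, a * b * c ∈ S := by
  obtain ⟨V, hVo, hV1, hVV⟩ := exists_open_nhds_one_mul_subset (hS.mem_nhds h1)
  obtain ⟨V', hV'o, hV'1, hV'V⟩ := exists_open_nhds_one_mul_subset (hVo.mem_nhds hV1)
  refine ⟨V' ∩ V'⁻¹, hV'o.inter hV'o.inv, ⟨hV'1, by simpa using hV'1⟩, ?_, ?_⟩
  · rw [Set.inter_inv, inv_inv, Set.inter_comm]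
  · rintro a ⟨ha, -⟩ b ⟨hb, -⟩ c ⟨hc, -⟩
    have hab : a * b ∈ V := hV'V (Set.mul_mem_mul ha hb)
    have hc' : c ∈ V := hV'V (by simpa using Set.mul_mem_mul hc hV'1)
    exact hVV (Set.mul_mem_mul hab hc')

private noncomputable def bseq (W0 : Set G)
    (h : IsOpen W0 ∧ (1 : G) ∈ W0 ∧ W0⁻¹ = W0) :
    ℕ → {S : Set G // IsOpen S ∧ (1 : G) ∈ S ∧ S⁻¹ = S}
  | 0 => ⟨W0, h⟩
  | n + 1 =>
    ⟨(exists_symm_cube (bseq W0 h n).2.1 (bseq W0 h n).2.2.1).choose,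
      (exists_symm_cube (bseq W0 h n).2.1 (bseq W0 h n).2.2.1).choose_spec.1,
      (exists_symm_cube (bseq W0 h n).2.1 (bseq W0 h n).2.2.1).choose_spec.2.1,
      (exists_symm_cube (bseq W0 h n).2.1 (bseq W0 h n).2.2.1).choose_spec.2.2.1⟩

private lemma bseq_cube (W0 : Set G) (h : IsOpen W0 ∧ (1 : G) ∈ W0 ∧ W0⁻¹ = W0) (n : ℕ) :
    ∀ a ∈ (bseq W0 h (n + 1)).1, ∀ b ∈ (bseq W0 h (n + 1)).1, ∀ c ∈ (bseq W0 h (n + 1)).1,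
      a * b * c ∈ (bseq W0 h n).1 := by
  show ∀ a ∈ (exists_symm_cube (bseq W0 h n).2.1 (bseq W0 h n).2.2.1).choose, _
  exact (exists_symm_cube (bseq W0 h n).2.1 (bseq W0 h n).2.2.1).choose_spec.2.2.2

private lemma bseq_succ_subset (W0 : Set G) (h : IsOpen W0 ∧ (1 : G) ∈ W0 ∧ W0⁻¹ = W0)
    (n : ℕ) : (bseq W0 h (n + 1)).1 ⊆ (bseq W0 h n).1 := by
  intro t ht
  have := bseq_cube W0 h n t ht 1 (bseq W0 h (n + 1)).2.2.1 1 (bseq W0 h (n + 1)).2.2.1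
  simpa using this

private lemma bseq_anti (W0 : Set G) (h : IsOpen W0 ∧ (1 : G) ∈ W0 ∧ W0⁻¹ = W0)
    {i j : ℕ} (hij : i ≤ j) : (bseq W0 h j).1 ⊆ (bseq W0 h i).1 := by
  induction hij with
  | refl => exact subset_rfl
  | step _ ih => exact (bseq_succ_subset W0 h _).trans ih

/-- The key construction: from a symmetric open exhaustion with the cube property,
construct a continuous left-invariant pseudometric which is large outside `W n`. -/
private lemma exists_pseudometric (W : ℕ → Set G)
    (hopen : ∀ n, IsOpen (W n)) (h1 : (1 : G) ∈ W 0) (hsymm : ∀ n, (W n)⁻¹ = W n)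
    (hmono : ∀ n, W n ⊆ W (n + 1))
    (hcube : ∀ n, ∀ a ∈ W n, ∀ b ∈ W n, ∀ c ∈ W n, a * b * c ∈ W (n + 1))
    (hcover : ∀ g : G, ∃ n, g ∈ W n) :
    ∃ d : G → G → ℝ, IsContLeftInvPseudometric G d ∧
      ∀ n : ℕ, ∀ g : G, g ∉ W n → (2 : ℝ) ^ n ≤ d 1 g := by
  classical
  have hW : IsOpen (W 0) ∧ (1 : G) ∈ W 0 ∧ (W 0)⁻¹ = W 0 := ⟨hopen 0, h1, hsymm 0⟩
  set B : ℕ → {S : Set G // IsOpen S ∧ (1 : G) ∈ S ∧ S⁻¹ = S} := bseq (W 0) hW with hB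
  have hB0 : (B 0).1 = W 0 := rfl
  have hBW0 : ∀ n, (B n).1 ⊆ W 0 := fun n => (bseq_anti (W 0) hW (Nat.zero_le n)).trans_eq hB0
  have Wmono : ∀ {i j : ℕ}, i ≤ j → W i ⊆ W j := fun hij => monotone_nat_of_le_succ hmono hij
  -- the fast pre-distance δ₀ near the identity
  set δ₀ : G → ℝ≥0 := fun g => ⨅ n : ℕ, if g ∈ (B n).1 then (2 : ℝ≥0)⁻¹ ^ n else 1 with hδ₀
  have hδle : ∀ g n, g ∈ (B n).1 → δ₀ g ≤ 2⁻¹ ^ n := fun g n h =>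
    (ciInf_le (OrderBot.bddBelow _) n).trans_eq (by simp [h])
  have hδone : ∀ g, δ₀ g ≤ 1 := fun g =>
    (ciInf_le (OrderBot.bddBelow _) 0).trans (by split <;> simp)
  have hδ1 : δ₀ (1 : G) = 0 :=
    nnreal_eq_zero_of_le_pow fun n => hδle 1 n (B n).2.2.1
  have hmemB : ∀ g n, δ₀ g < 2⁻¹ ^ n → g ∈ (B (n + 1)).1 := by
    intro g n hlt
    by_contra hg
    refine absurd hlt (not_lt.2 (le_ciInf fun k => ?_))
    by_cases hk : g ∈ (B k).1
    · have hkn : k < n + 1 := by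
        by_contra hkn
        exact hg (bseq_anti (W 0) hW (not_lt.1 hkn) hk)
      simp only [hk, if_true]
      exact pow_le_pow_of_le_one zero_le (by norm_num) (Nat.lt_succ_iff.1 hkn)
    · simp only [hk, if_false]
      exact pow_le_one₀ zero_le (by norm_num)
  have hδinv : ∀ g : G, δ₀ g⁻¹ = δ₀ g := by
    intro g
    have : ∀ n, (g⁻¹ ∈ (B n).1) = (g ∈ (B n).1) := by
      intro n
      rw [eq_iff_iff]
      conv_lhs => rw [← (B n).2.2.2]
      exact Set.inv_mem_inv
    simp only [hδ₀, this]
  -- the word-length-like scale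
  set m : G → ℕ := fun g => sInf {n | g ∈ W n} with hm
  have hmW : ∀ g, g ∈ W (m g) := fun g => Nat.sInf_mem (hcover g)
  have hm_le : ∀ {g n}, g ∈ W n → m g ≤ n := fun h => Nat.sInf_le h
  have hm_gt : ∀ {g n}, g ∉ W n → n + 1 ≤ m g := by
    intro g n hg
    by_contra hle
    exact hg (Wmono (Nat.lt_succ_iff.1 (not_le.1 hle)) (hmW g))
  have hminv : ∀ g : G, m g⁻¹ = m g := by
    intro g
    have : {n | g⁻¹ ∈ W n} = {n | g ∈ W n} := by
      ext n
      simp only [Set.mem_setOf_eq]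
      conv_lhs => rw [← hsymm n]
      exact Set.inv_mem_inv
    simp only [hm, this]
  -- the combined weight function σ
  set σ : G → ℝ≥0 := fun g => if g ∈ W 0 then δ₀ g else (2 : ℝ≥0) ^ m g with hσ
  have hσ1 : σ 1 = 0 := by simp [hσ, h1, hδ1]
  have hσW : ∀ g k, g ∈ W k → σ g ≤ 2 ^ k := by
    intro g k hg
    by_cases h0 : g ∈ W 0
    · simp only [hσ, h0, if_true]
      exact (hδone g).trans (one_le_pow₀ one_le_two)
    · simp only [hσ, h0, if_false]
      exact pow_le_pow_right₀ one_le_two (hm_le hg)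
  have hσ_not : ∀ g n, g ∉ W n → (2 : ℝ≥0) ^ (n + 1) ≤ σ g := by
    intro g n hg
    have h0 : g ∉ W 0 := fun h => hg (Wmono (Nat.zero_le n) h)
    simp only [hσ, h0, if_false]
    exact pow_le_pow_right₀ one_le_two (hm_gt hg)
  have hσ_lt_one : ∀ g, σ g < 1 → g ∈ W 0 := by
    intro g hg
    by_contra h0
    simp only [hσ, h0, if_false] at hg
    exact absurd hg (not_lt.2 (one_le_pow₀ one_le_two))
  have hσinv : ∀ g : G, σ g⁻¹ = σ g := by
    intro g
    have hmem : (g⁻¹ ∈ W 0) = (g ∈ W 0) := by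
      rw [eq_iff_iff]
      conv_lhs => rw [← hsymm 0]
      exact Set.inv_mem_inv
    simp only [hσ, hmem, hδinv, hminv]
  -- the Frink-type inequality for σ
  have hF : ∀ a b c : G, σ (a * b * c) ≤ 2 * max (σ a) (max (σ b) (σ c)) := by
    intro a b c
    set M : ℝ≥0 := max (σ a) (max (σ b) (σ c)) with hM
    rcases le_or_gt 1 M with hM1 | hM1
    · -- large scale : use the W hierarchy
      set k : ℕ := max (m a) (max (m b) (m c)) with hk
      have hak : a ∈ W k := Wmono (le_max_left _ _) (hmW a)
      have hbk : b ∈ W k := Wmono ((le_max_left _ _).trans (le_max_right _ _)) (hmW b)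
      have hck : c ∈ W k := Wmono ((le_max_right _ _).trans (le_max_right _ _)) (hmW c)
      have habc : a * b * c ∈ W (k + 1) := hcube k a hak b hbk c hck
      have h2m : ∀ g, σ g ≤ M → (2 : ℝ≥0) ^ m g ≤ M := by
        intro g hg
        by_cases h0 : g ∈ W 0
        · have : m g = 0 := Nat.le_zero.1 (hm_le h0)
          rw [this, pow_zero]; exact hM1
        · simpa only [hσ, h0, if_false] using hg
      have h2k : (2 : ℝ≥0) ^ k ≤ M := by
        have ha' := h2m a (le_max_left _ _)
        have hb' := h2m b ((le_max_left _ _).trans (le_max_right _ _))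
        have hc' := h2m c ((le_max_right _ _).trans (le_max_right _ _))
        rcases max_cases (m a) (max (m b) (m c)) with ⟨h, -⟩ | ⟨h, -⟩
        · rw [hk, h]; exact ha'
        · rw [hk, h]
          rcases max_cases (m b) (m c) with ⟨h', -⟩ | ⟨h', -⟩
          · rw [h']; exact hb'
          · rw [h']; exact hc'
      calc σ (a * b * c) ≤ 2 ^ (k + 1) := hσW _ _ habc
        _ = 2 * 2 ^ k := by rw [pow_succ, mul_comm]
        _ ≤ 2 * M := mul_le_mul_right h2k 2
    · -- small scale : use the B hierarchy
      have hmem : ∀ g, σ g ≤ M → g ∈ W 0 ∧ σ g = δ₀ g := by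
        intro g hg
        have h0 : g ∈ W 0 := hσ_lt_one g (hg.trans_lt hM1)
        exact ⟨h0, by simp [hσ, h0]⟩
      obtain ⟨ha0, haδ⟩ := hmem a (le_max_left _ _)
      obtain ⟨hb0, hbδ⟩ := hmem b ((le_max_left _ _).trans (le_max_right _ _))
      obtain ⟨hc0, hcδ⟩ := hmem c ((le_max_right _ _).trans (le_max_right _ _))
      have hstep : ∀ n : ℕ, M < 2⁻¹ ^ n → σ (a * b * c) ≤ 2⁻¹ ^ n := by
        intro n hn
        have haB : a ∈ (B (n + 1)).1 :=
          hmemB a n (lt_of_le_of_lt (haδ ▸ le_max_left _ _) hn)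
        have hbB : b ∈ (B (n + 1)).1 :=
          hmemB b n (lt_of_le_of_lt (hbδ ▸ (le_max_left _ _).trans (le_max_right _ _)) hn)
        have hcB : c ∈ (B (n + 1)).1 :=
          hmemB c n (lt_of_le_of_lt (hcδ ▸ (le_max_right _ _).trans (le_max_right _ _)) hn)
        have habcB : a * b * c ∈ (B n).1 := bseq_cube (W 0) hW n a haB b hbB c hcB
        have h0 : a * b * c ∈ W 0 := hBW0 n habcB
        calc σ (a * b * c) = δ₀ (a * b * c) := by simp [hσ, h0]
          _ ≤ 2⁻¹ ^ n := hδle _ n habcB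
      rcases eq_or_lt_of_le (zero_le : (0 : ℝ≥0) ≤ M) with hM0 | hM0
      · have : σ (a * b * c) = 0 :=
          nnreal_eq_zero_of_le_pow fun n => hstep n (by rw [← hM0]; exact pow_pos (inv_pos.2 two_pos) n)
        rw [this]; exact zero_le
      · -- 0 < M < 1 : find n with 2⁻¹^(n+1) ≤ M < 2⁻¹^n
        have hex : ∃ k : ℕ, (2 : ℝ≥0)⁻¹ ^ k ≤ M := by
          obtain ⟨k, hk⟩ := NNReal.exists_pow_lt_of_lt_one hM0 two_inv_lt_one
          exact ⟨k, hk.le⟩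
        have hNspec : (2 : ℝ≥0)⁻¹ ^ (Nat.find hex) ≤ M := Nat.find_spec hex
        have hN0 : Nat.find hex ≠ 0 := by
          intro h
          rw [h, pow_zero] at hNspec
          exact absurd hNspec (not_le.2 hM1)
        set n : ℕ := Nat.find hex - 1 with hn
        have hNeq : Nat.find hex = n + 1 := by omega
        rw [hNeq] at hNspec
        have hnlt : M < 2⁻¹ ^ n := not_le.1 (Nat.find_min hex (by omega))
        calc σ (a * b * c) ≤ 2⁻¹ ^ n := hstep n hnlt
          _ = 2 * 2⁻¹ ^ (n + 1) := by
            rw [pow_succ, ← mul_assoc, mul_comm (2 : ℝ≥0) _, mul_assoc]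
            norm_num
          _ ≤ 2 * M := mul_le_mul_right hNspec 2
  -- the pre-distance and the chain pseudometric
  set D₀ : G → G → ℝ≥0 := fun x y => σ (x⁻¹ * y) with hD₀
  have hself : ∀ x : G, D₀ x x = 0 := by intro x; simp [hD₀, hσ1]
  have hcomm : ∀ x y : G, D₀ x y = D₀ y x := by
    intro x y
    have : (x⁻¹ * y)⁻¹ = y⁻¹ * x := by simp [mul_inv_rev]
    rw [hD₀]
    dsimp only
    rw [← hσinv (x⁻¹ * y), this]
  have hd4 : ∀ x₁ x₂ x₃ x₄ : G,
      D₀ x₁ x₄ ≤ 2 * max (D₀ x₁ x₂) (max (D₀ x₂ x₃) (D₀ x₃ x₄)) := by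
    intro x₁ x₂ x₃ x₄
    have key : x₁⁻¹ * x₄ = (x₁⁻¹ * x₂) * (x₂⁻¹ * x₃) * (x₃⁻¹ * x₄) := by group
    simp only [hD₀]
    rw [key]
    exact hF _ _ _
  set d : G → G → ℝ := fun x y =>
    @dist G (@PseudoMetricSpace.toDist G (PseudoMetricSpace.ofPreNNDist D₀ hself hcomm)) x y
    with hd
  have dle : ∀ x y, d x y ≤ (D₀ x y : ℝ) := fun x y =>
    PseudoMetricSpace.dist_ofPreNNDist_le D₀ hself hcomm x y
  have dlow : ∀ x y, (D₀ x y : ℝ) ≤ 2 * d x y := fun x y =>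
    PseudoMetricSpace.le_two_mul_dist_ofPreNNDist D₀ hself hcomm hd4 x y
  have dself : ∀ x, d x x = 0 := (PseudoMetricSpace.ofPreNNDist D₀ hself hcomm).dist_self
  have dcomm : ∀ x y, d x y = d y x := (PseudoMetricSpace.ofPreNNDist D₀ hself hcomm).dist_comm
  have dtri : ∀ x y z, d x z ≤ d x y + d y z :=
    (PseudoMetricSpace.ofPreNNDist D₀ hself hcomm).dist_triangle
  have dnonneg : ∀ x y, 0 ≤ d x y := by
    intro x y
    rw [hd]
    dsimp only
    rw [PseudoMetricSpace.dist_ofPreNNDist]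
    exact NNReal.coe_nonneg _
  -- left invariance
  have dinv_le : ∀ g x y : G, d (g * x) (g * y) ≤ d x y := by
    intro g x y
    rw [hd]
    dsimp only
    rw [PseudoMetricSpace.dist_ofPreNNDist, PseudoMetricSpace.dist_ofPreNNDist,
      NNReal.coe_le_coe]
    refine le_ciInf fun l => ?_
    refine (ciInf_le (OrderBot.bddBelow _) (l.map (g * ·))).trans_eq ?_
    have h1' : (g * x :: l.map (g * ·)) = (x :: l).map (g * ·) := by simp
    have h2' : (l.map (g * ·) ++ [g * y]) = (l ++ [y]).map (g * ·) := by simp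
    rw [h1', h2', List.zipWith_map]
    congr 1
    have : (fun a b => D₀ (g * a) (g * b)) = D₀ := by
      funext a b
      simp only [hD₀, mul_inv_rev]
      congr 1
      group
    rw [this]
  have dinv : ∀ g x y : G, d (g * x) (g * y) = d x y := by
    intro g x y
    refine le_antisymm (dinv_le g x y) ?_
    have := dinv_le g⁻¹ (g * x) (g * y)
    simpa [inv_mul_cancel_left] using this
  -- continuity
  have habs : ∀ x y x' y' : G, d x' y' - d x y ≤ d x x' + d y y' := by
    intro x y x' y'
    have h1' := dtri x' x y'
    have h2' := dtri x y y'
    have h3' := dcomm x' x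
    linarith
  have hcont : Continuous fun p : G × G => d p.1 p.2 := by
    rw [continuous_iff_continuousAt]
    rintro ⟨x, y⟩
    have : Filter.Tendsto (fun p : G × G => d p.1 p.2) (nhds (x, y)) (nhds (d x y)) := by
      rw [Metric.tendsto_nhds]
      intro ε hε
      obtain ⟨n, hn⟩ := exists_pow_lt_of_lt_one (by linarith : (0 : ℝ) < ε / 2)
        (by norm_num : (2 : ℝ)⁻¹ < 1)
      have hopenset : IsOpen {p : G × G | x⁻¹ * p.1 ∈ (B n).1 ∧ y⁻¹ * p.2 ∈ (B n).1} := by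
        have c1 : Continuous fun p : G × G => x⁻¹ * p.1 :=
          continuous_const.mul continuous_fst
        have c2 : Continuous fun p : G × G => y⁻¹ * p.2 :=
          continuous_const.mul continuous_snd
        exact ((B n).2.1.preimage c1).inter ((B n).2.1.preimage c2)
      have hmemset : ((x, y) : G × G) ∈
          {p : G × G | x⁻¹ * p.1 ∈ (B n).1 ∧ y⁻¹ * p.2 ∈ (B n).1} := by
        constructor <;> simp [(B n).2.2.1]
      filter_upwards [hopenset.mem_nhds hmemset] with p hp
      have hbound : ∀ u v w : G, u⁻¹ * v ∈ (B n).1 → d u v ≤ (2 : ℝ)⁻¹ ^ n := by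
        intro u v w huv
        have h0 : u⁻¹ * v ∈ W 0 := hBW0 n huv
        have : σ (u⁻¹ * v) ≤ (2 : ℝ≥0)⁻¹ ^ n := by
          rw [hσ]
          dsimp only
          rw [if_pos h0]
          exact hδle _ n huv
        calc d u v ≤ (D₀ u v : ℝ) := dle u v
          _ ≤ (((2 : ℝ≥0)⁻¹ ^ n : ℝ≥0) : ℝ) := NNReal.coe_le_coe.2 this
          _ = (2 : ℝ)⁻¹ ^ n := by push_cast; ring
      have hx' : d x p.1 ≤ (2 : ℝ)⁻¹ ^ n := hbound x p.1 1 hp.1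
      have hy' : d y p.2 ≤ (2 : ℝ)⁻¹ ^ n := hbound y p.2 1 hp.2
      have hA1 : d p.1 p.2 - d x y ≤ d x p.1 + d y p.2 := habs x y p.1 p.2
      have hA2 : d x y - d p.1 p.2 ≤ d p.1 x + d p.2 y := habs p.1 p.2 x y
      have hc1 : d p.1 x = d x p.1 := dcomm _ _
      have hc2 : d p.2 y = d y p.2 := dcomm _ _
      rw [Real.dist_eq, abs_lt]
      constructor <;> linarith
    exact this
  refine ⟨d, ⟨hcont, dself, dcomm, dnonneg, dtri, dinv⟩, ?_⟩
  -- the lower bound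
  intro n g hg
  have h1g : D₀ 1 g = σ g := by simp [hD₀]
  have hσg : (2 : ℝ≥0) ^ (n + 1) ≤ σ g := hσ_not g n hg
  have := dlow 1 g
  rw [h1g] at this
  have hcoe : ((2 : ℝ) ^ (n + 1)) ≤ (σ g : ℝ) := by
    calc ((2 : ℝ) ^ (n + 1)) = (((2 : ℝ≥0) ^ (n + 1) : ℝ≥0) : ℝ) := by push_cast; ring
      _ ≤ (σ g : ℝ) := NNReal.coe_le_coe.2 hσg
  have hpow : (2 : ℝ) ^ (n + 1) = 2 * 2 ^ n := by rw [pow_succ]; ring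
  nlinarith [dnonneg 1 g]

end Aux

/-- A subset `A` of a topological group is coarsely bounded if and only if for every
increasing exhaustion of `G` by open sets `U n` with `U n * U n ⊆ U (n+1)`,
`A` is contained in some `U n`. -/
theorem isCoarselyBounded_iff_exhaustion {G : Type*} [Group G] [TopologicalSpace G]
    [IsTopologicalGroup G] (A : Set G) :
    IsCoarselyBounded G A ↔
      ∀ U : ℕ → Set G, (∀ n, IsOpen (U n)) → (∀ n, U n ⊆ U (n + 1)) →
        (∀ n, ∀ u ∈ U n, ∀ v ∈ U n, u * v ∈ U (n + 1)) →
        (∀ g : G, ∃ n, g ∈ U n) → ∃ n, A ⊆ U n := by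
  constructor
  · -- hard direction
    intro hCB U hopen hsub hmul hcover
    by_contra hA
    push_neg at hA
    have hA' : ∀ n, ∃ a ∈ A, a ∉ U n := fun n => Set.not_subset.1 (hA n)
    have Umono : ∀ {i j : ℕ}, i ≤ j → U i ⊆ U j := fun hij => monotone_nat_of_le_succ hsub hij
    obtain ⟨n₀, hn₀⟩ := hcover 1
    set V : ℕ → Set G := fun n => U (n₀ + n) ∩ (U (n₀ + n))⁻¹ with hV
    have hVo : ∀ n, IsOpen (V n) := fun n => (hopen _).inter (hopen _).inv
    have h1V : ∀ n, (1 : G) ∈ V n := by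
      intro n
      refine ⟨Umono (Nat.le_add_right _ _) hn₀, ?_⟩
      rw [Set.mem_inv, inv_one]
      exact Umono (Nat.le_add_right _ _) hn₀
    have hVsymm : ∀ n, (V n)⁻¹ = V n := by
      intro n
      rw [hV]
      dsimp only
      rw [Set.inter_inv, inv_inv, Set.inter_comm]
    have hVmono : ∀ {i j : ℕ}, i ≤ j → V i ⊆ V j := by
      intro i j hij
      exact Set.inter_subset_inter (Umono (by omega)) (Set.inv_subset_inv.2 (Umono (by omega)))
    have hVmul : ∀ n, ∀ u ∈ V n, ∀ v ∈ V n, u * v ∈ V (n + 1) := by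
      intro n u hu v hv
      have h1' : u * v ∈ U (n₀ + n + 1) := hmul _ u hu.1 v hv.1
      have h2' : (u * v)⁻¹ ∈ U (n₀ + n + 1) := by
        rw [mul_inv_rev]
        exact hmul _ v⁻¹ (Set.mem_inv.1 hv.2) u⁻¹ (Set.mem_inv.1 hu.2)
      have heq : n₀ + n + 1 = n₀ + (n + 1) := by omega
      rw [heq] at h1' h2'
      exact ⟨h1', Set.mem_inv.2 h2'⟩
    set W : ℕ → Set G := fun n => V (2 * n) with hWdef
    have hWo : ∀ n, IsOpen (W n) := fun n => hVo _
    have h1W : (1 : G) ∈ W 0 := h1V _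
    have hWsymm : ∀ n, (W n)⁻¹ = W n := fun n => hVsymm _
    have hWmono : ∀ n, W n ⊆ W (n + 1) := fun n => hVmono (by omega)
    have hWcube : ∀ n, ∀ a ∈ W n, ∀ b ∈ W n, ∀ c ∈ W n, a * b * c ∈ W (n + 1) := by
      intro n a ha b hb c hc
      have hab : a * b ∈ V (2 * n + 1) := hVmul _ a ha b hb
      have hc' : c ∈ V (2 * n + 1) := hVmono (by omega) hc
      have habc : a * b * c ∈ V (2 * n + 1 + 1) := hVmul _ _ hab _ hc'
      have heq : 2 * n + 1 + 1 = 2 * (n + 1) := by omega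
      rw [heq] at habc
      exact habc
    have hWcover : ∀ g : G, ∃ n, g ∈ W n := by
      intro g
      obtain ⟨p, hp⟩ := hcover g
      obtain ⟨q, hq⟩ := hcover g⁻¹
      refine ⟨max p q, ⟨Umono (by omega) hp, ?_⟩⟩
      rw [Set.mem_inv]
      exact Umono (by omega) hq
    obtain ⟨d, hd, hlow⟩ := exists_pseudometric W hWo h1W hWsymm hWmono hWcube hWcover
    obtain ⟨M, hM⟩ := hCB d hd
    obtain ⟨a₀, ha₀A, -⟩ := hA' 0
    obtain ⟨k, hk⟩ := pow_unbounded_of_one_lt (d 1 a₀ + M) (one_lt_two : (1 : ℝ) < 2)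
    obtain ⟨a, haA, haU⟩ := hA' (n₀ + 2 * k)
    have haW : a ∉ W k := fun h => haU h.1
    have h1 := hlow k a haW
    have h2 : d 1 a ≤ d 1 a₀ + d a₀ a := hd.triangle 1 a₀ a
    have h3 : d a₀ a ≤ M := hM a₀ ha₀A a haA
    linarith
  · -- easy direction
    intro hEx d hd
    set U : ℕ → Set G := fun n => {g | d 1 g < 2 ^ n} with hU
    have hdcont : ∀ n, IsOpen (U n) := by
      intro n
      have : Continuous fun g : G => d 1 g :=
        hd.continuous.comp (continuous_const.prodMk continuous_id)
      exact isOpen_lt this continuous_const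
    have hsub : ∀ n, U n ⊆ U (n + 1) := by
      intro n g hg
      have : (2 : ℝ) ^ n ≤ 2 ^ (n + 1) := by
        have := pow_le_pow_right₀ (one_le_two : (1 : ℝ) ≤ 2) (Nat.le_succ n)
        exact this
      exact lt_of_lt_of_le hg this
    have hmul : ∀ n, ∀ u ∈ U n, ∀ v ∈ U n, u * v ∈ U (n + 1) := by
      intro n u hu v hv
      have h1' : d 1 (u * v) ≤ d 1 u + d u (u * v) := hd.triangle 1 u (u * v)
      have h2' : d u (u * v) = d 1 v := by
        have := hd.left_inv u 1 v
        simpa using this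
      rw [h2'] at h1'
      have hu' : d 1 u < 2 ^ n := hu
      have hv' : d 1 v < 2 ^ n := hv
      show d 1 (u * v) < 2 ^ (n + 1)
      rw [pow_succ]
      linarith
    have hcover : ∀ g : G, ∃ n, g ∈ U n := fun g =>
      pow_unbounded_of_one_lt (d 1 g) (one_lt_two : (1 : ℝ) < 2)
    obtain ⟨n, hn⟩ := hEx U hdcont hsub hmul hcover
    refine ⟨2 ^ n + 2 ^ n, ?_⟩
    intro a ha b hb
    have h1' : d a b ≤ d a 1 + d 1 b := hd.triangle a 1 b
    have h2' : d a 1 = d 1 a := hd.symm a 1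
    have ha' : d 1 a < 2 ^ n := hn ha
    have hb' : d 1 b < 2 ^ n := hn hb
    linarith
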